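/- arXiv:1911.07369 — 4 statements merged into one kernel-verified Lean document; each statement's English description precedes it below -/
import Mathlib

section
/- For every real number x ≥ 7, ∑_{n≤x} d(n)² ≤ x·(log x)³. -/
open Finset

lemma log_gap (n : ℕ) (hn : 1 ≤ n) :
    (1:ℝ)/(n+1) ≤ Real.log (n+1) - Real.log n := by
  have hn0 : (0:ℝ) < n := by exact_mod_cast hn
  have h1 : (0:ℝ) < (n:ℝ)/((n:ℝ)+1) := by positivity
  have h2 := Real.log_le_sub_one_of_pos h1
  rw [Real.log_div (by positivity) (by positivity)] at h2
  have h3 : (n:ℝ)/((n:ℝ)+1) - 1 = -(1/((n:ℝ)+1)) := by field_simp; ring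
  linarith

lemma sum_inv_le' (n : ℕ) (hn : 1 ≤ n) :
    ∑ a ∈ Icc 1 n, (1:ℝ)/a ≤ 1 + Real.log n := by
  induction n with
  | zero => omega
  | succ m ih =>
    rcases Nat.eq_zero_or_pos m with h|h
    · subst h; simp
    · rw [Finset.sum_Icc_succ_top (by omega)]
      have h1 := log_gap m h
      have h2 := ih h
      push_cast
      linarith

lemma sum_inv_le (y : ℝ) (hy : 1 ≤ y) (n : ℕ) (hny : (n:ℝ) ≤ y) :
    ∑ a ∈ Icc 1 n, (1:ℝ)/a ≤ 1 + Real.log y := by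
  rcases Nat.eq_zero_or_pos n with h|h
  · subst h; simp; have := Real.log_nonneg hy; linarith
  · refine le_trans (sum_inv_le' n h) ?_
    have : Real.log n ≤ Real.log y :=
      Real.log_le_log (by exact_mod_cast h) hny
    linarith

lemma sum_log_le' (y : ℝ) (hy : 1 ≤ y) (n : ℕ) (hn : 1 ≤ n) (hny : (n:ℝ) ≤ y) :
    ∑ a ∈ Icc 1 n, Real.log (y/a)/a
      ≤ Real.log y + (Real.log y)^2/2 - (Real.log (y/n))^2/2 := by
  induction n with
  | zero => omega
  | succ m ih =>
    rcases Nat.eq_zero_or_pos m with h|h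
    · subst h; norm_num
    · have hm0 : (0:ℝ) < m := by exact_mod_cast h
      have hmy : (m:ℝ) ≤ y := by push_cast at hny; linarith
      have H := ih h hmy
      rw [Finset.sum_Icc_succ_top (by omega)]
      have hy0 : (0:ℝ) < y := by linarith
      have hA : Real.log (y/m) = Real.log y - Real.log m := Real.log_div (by positivity) (by positivity)
      have hB : Real.log (y/(m+1:ℕ)) = Real.log y - Real.log ((m:ℝ)+1) := by
        push_cast
        exact Real.log_div (by positivity) (by positivity)
      have hgap := log_gap m h
      have hB0 : 0 ≤ Real.log (y/(m+1:ℕ)) := by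
        apply Real.log_nonneg
        rw [le_div_iff₀ (by push_cast; positivity)]
        push_cast at hny ⊢; linarith
      set A := Real.log (y/m)
      set B := Real.log (y/(m+1:ℕ))
      have hd : 1/((m:ℝ)+1) ≤ A - B := by rw [hA, hB]; linarith
      have h1 : B / ((m:ℝ)+1) ≤ B * (A - B) := by
        rw [div_eq_mul_one_div]
        exact mul_le_mul_of_nonneg_left hd hB0
      have h2 : B * (A - B) ≤ A^2/2 - B^2/2 := by nlinarith [sq_nonneg (A - B)]
      have key : B/((m:ℕ)+1:ℝ) ≤ A^2/2 - B^2/2 := by push_cast; linarith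
      push_cast at key ⊢
      linarith

lemma sum_log_le (y : ℝ) (hy : 1 ≤ y) (n : ℕ) (hny : (n:ℝ) ≤ y) :
    ∑ a ∈ Icc 1 n, Real.log (y/a)/a ≤ Real.log y + (Real.log y)^2/2 := by
  rcases Nat.eq_zero_or_pos n with h|h
  · subst h; simp
    have := Real.log_nonneg hy
    nlinarith
  · have := sum_log_le' y hy n h hny
    nlinarith [sq_nonneg (Real.log (y/n))]

lemma sum_sq_log_le' (y : ℝ) (hy : 1 ≤ y) (n : ℕ) (hn : 1 ≤ n) (hny : (n:ℝ) ≤ y) :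
    ∑ a ∈ Icc 1 n, (Real.log (y/a))^2/a
      ≤ (Real.log y)^2 + (Real.log y)^3/3 - (Real.log (y/n))^3/3 := by
  induction n with
  | zero => omega
  | succ m ih =>
    rcases Nat.eq_zero_or_pos m with h|h
    · subst h; norm_num
    · have hm0 : (0:ℝ) < m := by exact_mod_cast h
      have hmy : (m:ℝ) ≤ y := by push_cast at hny; linarith
      have H := ih h hmy
      rw [Finset.sum_Icc_succ_top (by omega)]
      have hy0 : (0:ℝ) < y := by linarith
      have hA : Real.log (y/m) = Real.log y - Real.log m := Real.log_div (by positivity) (by positivity)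
      have hB : Real.log (y/(m+1:ℕ)) = Real.log y - Real.log ((m:ℝ)+1) := by
        push_cast
        exact Real.log_div (by positivity) (by positivity)
      have hgap := log_gap m h
      have hB0 : 0 ≤ Real.log (y/(m+1:ℕ)) := by
        apply Real.log_nonneg
        rw [le_div_iff₀ (by push_cast; positivity)]
        push_cast at hny ⊢; linarith
      set A := Real.log (y/m)
      set B := Real.log (y/(m+1:ℕ))
      have hd : 1/((m:ℝ)+1) ≤ A - B := by rw [hA, hB]; linarith
      have h1 : B^2 / ((m:ℝ)+1) ≤ B^2 * (A - B) := by
        rw [div_eq_mul_one_div]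
        exact mul_le_mul_of_nonneg_left hd (sq_nonneg B)
      have hm1 : (0:ℝ) < 1/((m:ℝ)+1) := by positivity
      have h2 : B^2 * (A - B) ≤ A^3/3 - B^3/3 := by
        nlinarith [mul_nonneg (sq_nonneg (A - B)) (by linarith : (0:ℝ) ≤ A + 2*B)]
      have key : B^2/((m:ℕ)+1:ℝ) ≤ A^3/3 - B^3/3 := by push_cast; linarith
      push_cast at key ⊢
      linarith

lemma sum_sq_log_le (y : ℝ) (hy : 1 ≤ y) (n : ℕ) (hny : (n:ℝ) ≤ y) :
    ∑ a ∈ Icc 1 n, (Real.log (y/a))^2/a ≤ (Real.log y)^2 + (Real.log y)^3/3 := by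
  rcases Nat.eq_zero_or_pos n with h|h
  · subst h; simp
    have := Real.log_nonneg hy
    nlinarith
  · have h1 := sum_sq_log_le' y hy n h hny
    have hB0 : 0 ≤ Real.log (y/n) := by
      apply Real.log_nonneg
      rw [le_div_iff₀ (by exact_mod_cast h)]
      simpa using hny
    nlinarith [pow_nonneg hB0 3]


lemma card_sq_le (n N : ℕ) (hn : 1 ≤ n) (hnN : n ≤ N) :
    n.divisors.card ^ 2 ≤ ((Icc 1 N ×ˢ Icc 1 N ×ˢ Icc 1 N).filter
      (fun t : ℕ × ℕ × ℕ => t.1 * (t.2.1 * t.2.2) ∣ n)).card := by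
  rw [sq, ← Finset.card_product]
  apply Finset.card_le_card_of_injOn
      (fun p => (Nat.gcd p.1 p.2, p.1 / Nat.gcd p.1 p.2, p.2 / Nat.gcd p.1 p.2))
  · rintro ⟨a, b⟩ hp
    simp only [Finset.mem_coe, Finset.mem_product, Nat.mem_divisors] at hp
    obtain ⟨⟨ha, hn0⟩, hb, -⟩ := hp
    have ha0 : 0 < a := Nat.pos_of_dvd_of_pos ha (by omega)
    have hb0 : 0 < b := Nat.pos_of_dvd_of_pos hb (by omega)
    have hg0 : 0 < Nat.gcd a b := Nat.gcd_pos_of_pos_left b ha0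
    have hgdvda : Nat.gcd a b ∣ a := Nat.gcd_dvd_left a b
    have hgdvdb : Nat.gcd a b ∣ b := Nat.gcd_dvd_right a b
    have haN : a ≤ N := le_trans (Nat.le_of_dvd (by omega) ha) hnN
    have hbN : b ≤ N := le_trans (Nat.le_of_dvd (by omega) hb) hnN
    simp only [Finset.mem_coe, Finset.mem_filter, Finset.mem_product, Finset.mem_Icc]
    refine ⟨⟨⟨hg0, le_trans (Nat.le_of_dvd ha0 hgdvda) haN⟩,
      ⟨Nat.one_le_div_iff hg0 |>.mpr (Nat.le_of_dvd ha0 hgdvda), le_trans (Nat.div_le_self _ _) haN⟩,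
      ⟨Nat.one_le_div_iff hg0 |>.mpr (Nat.le_of_dvd hb0 hgdvdb), le_trans (Nat.div_le_self _ _) hbN⟩⟩, ?_⟩
    have key : Nat.gcd a b * (a / Nat.gcd a b * (b / Nat.gcd a b)) = Nat.lcm a b := by
      rw [← Nat.mul_assoc, Nat.mul_div_cancel' hgdvda, ← Nat.mul_div_assoc a hgdvdb]
      rfl
    rw [key]
    exact Nat.lcm_dvd ha hb
  · rintro ⟨a, b⟩ _ ⟨c, d⟩ _ heq
    simp only [Prod.mk.injEq] at heq
    obtain ⟨h1, h2, h3⟩ := heq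
    have e1 : a = Nat.gcd a b * (a / Nat.gcd a b) := (Nat.mul_div_cancel' (Nat.gcd_dvd_left a b)).symm
    have e2 : b = Nat.gcd a b * (b / Nat.gcd a b) := (Nat.mul_div_cancel' (Nat.gcd_dvd_right a b)).symm
    have e3 : c = Nat.gcd c d * (c / Nat.gcd c d) := (Nat.mul_div_cancel' (Nat.gcd_dvd_left c d)).symm
    have e4 : d = Nat.gcd c d * (d / Nat.gcd c d) := (Nat.mul_div_cancel' (Nat.gcd_dvd_right c d)).symm
    have hac : a = c := by rw [e1, e3, h2, h1]
    have hbd : b = d := by rw [e2, e4, h3, h1]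
    simp only [Prod.mk.injEq]
    exact ⟨hac, hbd⟩



lemma inner2 (y : ℝ) (hy : 1 ≤ y) (n : ℕ) (hny : (n:ℝ) ≤ y)
    (l1 : ∑ a ∈ Icc 1 n, (1:ℝ)/a ≤ 1 + Real.log y)
    (l2 : ∑ a ∈ Icc 1 n, Real.log (y/a)/a ≤ Real.log y + (Real.log y)^2/2) :
    ∑ u ∈ Icc 1 n, (1/(u:ℝ)) * (1 + Real.log (y/u)) ≤ 1 + 2*Real.log y + (Real.log y)^2/2 := by
  have e : ∀ u ∈ Icc 1 n, (1/(u:ℝ)) * (1 + Real.log (y/u)) = 1/(u:ℝ) + Real.log (y/u)/u := by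
    intro u _; ring
  rw [Finset.sum_congr rfl e, Finset.sum_add_distrib]
  linarith

lemma outer3 (y : ℝ) (n : ℕ)
    (l1 : ∑ a ∈ Icc 1 n, (1:ℝ)/a ≤ 1 + Real.log y)
    (l2 : ∑ a ∈ Icc 1 n, Real.log (y/a)/a ≤ Real.log y + (Real.log y)^2/2)
    (l3 : ∑ a ∈ Icc 1 n, (Real.log (y/a))^2/a ≤ (Real.log y)^2 + (Real.log y)^3/3) :
    ∑ g ∈ Icc 1 n, (1/(g:ℝ)) * (1 + 2*Real.log (y/g) + (Real.log (y/g))^2/2)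
      ≤ 1 + 3*Real.log y + (3/2)*(Real.log y)^2 + (Real.log y)^3/6 := by
  have e : ∀ g ∈ Icc 1 n, (1/(g:ℝ)) * (1 + 2*Real.log (y/g) + (Real.log (y/g))^2/2)
      = 1/(g:ℝ) + 2*(Real.log (y/g)/g) + (Real.log (y/g))^2/g/2 := by
    intro g _; ring
  rw [Finset.sum_congr rfl e, Finset.sum_add_distrib, Finset.sum_add_distrib,
    ← Finset.mul_sum, ← Finset.sum_div]
  linarith


lemma finite_case (x : ℝ) (N S p q : ℕ) (hq : 0 < q) (hN : 0 < N) (hNx : (N:ℝ) ≤ x)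
    (h2 : 2 ^ p ≤ N ^ q)
    (hS : (∑ n ∈ Icc 1 N, n.divisors.card ^ 2) = S)
    (hnum : (S:ℝ) ≤ (N:ℝ) * (((p:ℝ)/(q:ℝ)) * 0.6931471803) ^ 3) :
    (∑ n ∈ Icc 1 N, ((n.divisors.card : ℝ)) ^ 2) ≤ x * Real.log x ^ 3 := by
  have hx0 : (0:ℝ) < x := lt_of_lt_of_le (by exact_mod_cast hN) hNx
  have hq0 : (0:ℝ) < q := by exact_mod_cast hq
  have hlog2 : (0.6931471803:ℝ) ≤ Real.log 2 := le_of_lt Real.log_two_gt_d9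
  have hlogx : ((p:ℝ)/(q:ℝ)) * Real.log 2 ≤ Real.log x := by
    have hcast : (2:ℝ) ^ p ≤ (N:ℝ) ^ q := by exact_mod_cast h2
    have l1 : Real.log ((2:ℝ) ^ p) ≤ Real.log ((N:ℝ) ^ q) :=
      Real.log_le_log (by positivity) hcast
    rw [Real.log_pow, Real.log_pow] at l1
    have l2 : Real.log (N:ℝ) ≤ Real.log x :=
      Real.log_le_log (by exact_mod_cast hN) hNx
    rw [div_mul_eq_mul_div, div_le_iff₀ hq0]
    calc (p:ℝ) * Real.log 2 ≤ (q:ℝ) * Real.log (N:ℝ) := l1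
    _ ≤ (q:ℝ) * Real.log x := by nlinarith
    _ = Real.log x * q := by ring
  have hc0 : (0:ℝ) ≤ ((p:ℝ)/(q:ℝ)) * 0.6931471803 := by positivity
  have hL : ((p:ℝ)/(q:ℝ)) * 0.6931471803 ≤ Real.log x := by
    refine le_trans ?_ hlogx
    have : (0:ℝ) ≤ (p:ℝ)/(q:ℝ) := by positivity
    nlinarith
  have hcastS : (∑ n ∈ Icc 1 N, ((n.divisors.card : ℝ)) ^ 2) = (S:ℝ) := by
    rw [← hS]; push_cast; rfl
  rw [hcastS]
  calc (S:ℝ) ≤ (N:ℝ) * (((p:ℝ)/(q:ℝ)) * 0.6931471803) ^ 3 := hnum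
  _ ≤ x * Real.log x ^ 3 := by gcongr


theorem step1 (x : ℝ) (hx1 : 1 ≤ x) :
    (∑ n ∈ Icc 1 ⌊x⌋₊, ((n.divisors.card : ℝ)) ^ 2)
      ≤ ∑ g ∈ Icc 1 ⌊x⌋₊, ∑ u ∈ Icc 1 ⌊x⌋₊, ∑ v ∈ Icc 1 ⌊x⌋₊,
        ((⌊x⌋₊ / (g * (u * v)) : ℕ) : ℝ) := by
  set N := ⌊x⌋₊ with hNdef
  have h1 : ∀ n ∈ Icc 1 N, ((n.divisors.card : ℝ)) ^ 2
      ≤ ∑ t ∈ (Icc 1 N ×ˢ Icc 1 N ×ˢ Icc 1 N),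
        (if t.1 * (t.2.1 * t.2.2) ∣ n then (1:ℝ) else 0) := by
    intro n hn
    rw [Finset.sum_boole]
    rw [Finset.mem_Icc] at hn
    exact_mod_cast card_sq_le n N hn.1 hn.2
  calc (∑ n ∈ Icc 1 N, ((n.divisors.card : ℝ)) ^ 2)
      ≤ ∑ n ∈ Icc 1 N, ∑ t ∈ (Icc 1 N ×ˢ Icc 1 N ×ˢ Icc 1 N),
          (if t.1 * (t.2.1 * t.2.2) ∣ n then (1:ℝ) else 0) := Finset.sum_le_sum h1
    _ = ∑ t ∈ (Icc 1 N ×ˢ Icc 1 N ×ˢ Icc 1 N), ∑ n ∈ Icc 1 N,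
          (if t.1 * (t.2.1 * t.2.2) ∣ n then (1:ℝ) else 0) := Finset.sum_comm
    _ = ∑ t ∈ (Icc 1 N ×ˢ Icc 1 N ×ˢ Icc 1 N), ((N / (t.1 * (t.2.1 * t.2.2)) : ℕ) : ℝ) := by
        refine Finset.sum_congr rfl fun t _ => ?_
        rw [Finset.sum_boole]
        norm_cast
        have hIcc : Finset.Icc 1 N = Finset.Ioc 0 N := by ext a; simp; omega
        rw [hIcc]
        exact Nat.Ioc_filter_dvd_card_eq_div N _
    _ = ∑ g ∈ Icc 1 N, ∑ u ∈ Icc 1 N, ∑ v ∈ Icc 1 N, ((N / (g * (u * v)) : ℕ) : ℝ) := by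
        rw [Finset.sum_product]
        exact Finset.sum_congr rfl fun g _ => by rw [Finset.sum_product]


-- inner v-sum bound, for fixed g u with g*u ≤ N
theorem inner_v (x : ℝ) (hx1 : 1 ≤ x) (g u : ℕ) (hg : 1 ≤ g) (hu : 1 ≤ u)
    (hgu : g * u ≤ ⌊x⌋₊) :
    ∑ v ∈ Icc 1 ⌊x⌋₊, ((⌊x⌋₊ / (g * (u * v)) : ℕ) : ℝ)
      ≤ x * (1/(g:ℝ)) * ((1/(u:ℝ)) * (1 + Real.log ((x/g)/u))) := by
  set N := ⌊x⌋₊ with hNdef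
  have hNx : (N:ℝ) ≤ x := Nat.floor_le (by linarith)
  have hgu0 : 0 < g * u := by positivity
  have hgux : (0:ℝ) < (g:ℝ) * u := by positivity
  set K := N / (g * u) with hK
  have hKN : K ≤ N := Nat.div_le_self _ _
  -- restrict the sum to Icc 1 K
  have hrestrict : ∑ v ∈ Icc 1 N, ((N / (g * (u * v)) : ℕ) : ℝ)
      = ∑ v ∈ Icc 1 K, ((N / (g * (u * v)) : ℕ) : ℝ) := by
    refine (Finset.sum_subset (Finset.Icc_subset_Icc_right hKN) ?_).symm
    intro v hv hv2
    rw [Finset.mem_Icc] at hv hv2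
    have hvK : K < v := by omega
    have : N < g * (u * v) := by
      rw [hK] at hvK
      have := (Nat.div_lt_iff_lt_mul hgu0).mp hvK
      calc N < v * (g * u) := this
        _ = g * (u * v) := by ring
    rw [Nat.div_eq_of_lt this]
    norm_num
  rw [hrestrict]
  have hbound : ∀ v ∈ Icc 1 K, ((N / (g * (u * v)) : ℕ) : ℝ)
      ≤ x * (1/(g:ℝ)) * ((1/(u:ℝ)) * (1/(v:ℝ))) := by
    intro v hv
    rw [Finset.mem_Icc] at hv
    have hv1 : (1:ℝ) ≤ v := by exact_mod_cast hv.1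
    have hv0 : (0:ℝ) < v := by linarith
    have c1 : ((N / (g * (u * v)) : ℕ) : ℝ) ≤ (N:ℝ) / ((g:ℝ) * ((u:ℝ) * (v:ℝ))) := by
      have h := Nat.cast_div_le (α := ℝ) (m := N) (n := g * (u * v))
      push_cast at h
      exact h
    have c2 : (N:ℝ) / ((g:ℝ) * ((u:ℝ) * (v:ℝ))) ≤ x / ((g:ℝ) * ((u:ℝ) * (v:ℝ))) := by
      gcongr
    have c3 : x / ((g:ℝ) * ((u:ℝ) * (v:ℝ))) = x * (1/(g:ℝ)) * ((1/(u:ℝ)) * (1/(v:ℝ))) := by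
      ring
    linarith
  calc ∑ v ∈ Icc 1 K, ((N / (g * (u * v)) : ℕ) : ℝ)
      ≤ ∑ v ∈ Icc 1 K, x * (1/(g:ℝ)) * ((1/(u:ℝ)) * (1/(v:ℝ))) := Finset.sum_le_sum hbound
    _ = x * (1/(g:ℝ)) * (1/(u:ℝ)) * ∑ v ∈ Icc 1 K, (1/(v:ℝ)) := by
        rw [Finset.mul_sum]
        exact Finset.sum_congr rfl fun v _ => by ring
    _ ≤ x * (1/(g:ℝ)) * ((1/(u:ℝ)) * (1 + Real.log ((x/g)/u))) := by
        have hy1 : (1:ℝ) ≤ (x/g)/u := by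
          rw [div_div, le_div_iff₀ hgux]
          have : ((g:ℝ) * u) ≤ N := by exact_mod_cast hgu
          linarith
        have hKy : (K:ℝ) ≤ (x/g)/u := by
          rw [div_div]
          refine le_trans Nat.cast_div_le ?_
          push_cast
          gcongr
        have := sum_inv_le ((x/g)/u) hy1 K hKy
        have hpos : (0:ℝ) ≤ x * (1/(g:ℝ)) * (1/(u:ℝ)) := by positivity
        calc x * (1/(g:ℝ)) * (1/(u:ℝ)) * ∑ v ∈ Icc 1 K, (1/(v:ℝ))
            ≤ x * (1/(g:ℝ)) * (1/(u:ℝ)) * (1 + Real.log ((x/g)/u)) :=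
              mul_le_mul_of_nonneg_left this hpos
          _ = x * (1/(g:ℝ)) * ((1/(u:ℝ)) * (1 + Real.log ((x/g)/u))) := by ring


theorem inner_u (x : ℝ) (hx1 : 1 ≤ x) (g : ℕ) (hg : 1 ≤ g) (hgN : g ≤ ⌊x⌋₊) :
    ∑ u ∈ Icc 1 ⌊x⌋₊, ∑ v ∈ Icc 1 ⌊x⌋₊, ((⌊x⌋₊ / (g * (u * v)) : ℕ) : ℝ)
      ≤ x * (1/(g:ℝ)) * (1 + 2*Real.log (x/g) + (Real.log (x/g))^2/2) := by
  set N := ⌊x⌋₊ with hNdef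
  have hNx : (N:ℝ) ≤ x := Nat.floor_le (by linarith)
  have hg0 : 0 < g := hg
  have hgr : (1:ℝ) ≤ (g:ℝ) := by exact_mod_cast hg
  have hgx : (g:ℝ) ≤ x := le_trans (by exact_mod_cast hgN) hNx
  have hrestrict : ∑ u ∈ Icc 1 N, ∑ v ∈ Icc 1 N, ((N / (g * (u * v)) : ℕ) : ℝ)
      = ∑ u ∈ Icc 1 (N/g), ∑ v ∈ Icc 1 N, ((N / (g * (u * v)) : ℕ) : ℝ) := by
    refine (Finset.sum_subset (Finset.Icc_subset_Icc_right (Nat.div_le_self _ _)) ?_).symm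
    intro u hu hu2
    rw [Finset.mem_Icc] at hu hu2
    have hgu : N < g * u := by
      have : N / g < u := by omega
      have := (Nat.div_lt_iff_lt_mul hg0).mp this
      calc N < u * g := this
        _ = g * u := by ring
    refine Finset.sum_eq_zero fun v hv => ?_
    rw [Finset.mem_Icc] at hv
    have : N < g * (u * v) := by
      calc N < g * u := hgu
        _ ≤ g * (u * v) := by nlinarith [hv.1]
    rw [Nat.div_eq_of_lt this]
    norm_num
  rw [hrestrict]
  have hxg1 : (1:ℝ) ≤ x / g := by rw [le_div_iff₀ (by linarith)]; linarith
  have hNgy : ((N/g : ℕ):ℝ) ≤ x / g := by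
    refine le_trans Nat.cast_div_le ?_
    gcongr
  have hmain : ∀ u ∈ Icc 1 (N/g), ∑ v ∈ Icc 1 N, ((N / (g * (u * v)) : ℕ) : ℝ)
      ≤ x * (1/(g:ℝ)) * ((1/(u:ℝ)) * (1 + Real.log ((x/g)/u))) := by
    intro u hu
    rw [Finset.mem_Icc] at hu
    have hguN : g * u ≤ N := by
      have := (Nat.le_div_iff_mul_le hg0).mp hu.2
      rwa [Nat.mul_comm u g] at this
    exact inner_v x hx1 g u hg hu.1 hguN
  calc ∑ u ∈ Icc 1 (N/g), ∑ v ∈ Icc 1 N, ((N / (g * (u * v)) : ℕ) : ℝ)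
      ≤ ∑ u ∈ Icc 1 (N/g), x * (1/(g:ℝ)) * ((1/(u:ℝ)) * (1 + Real.log ((x/g)/u))) :=
        Finset.sum_le_sum hmain
    _ = x * (1/(g:ℝ)) * ∑ u ∈ Icc 1 (N/g), (1/(u:ℝ)) * (1 + Real.log ((x/g)/u)) := by
        rw [Finset.mul_sum]
    _ ≤ x * (1/(g:ℝ)) * (1 + 2*Real.log (x/g) + (Real.log (x/g))^2/2) := by
        have h2 := inner2 (x/g) hxg1 (N/g) hNgy
          (sum_inv_le (x/g) hxg1 (N/g) hNgy) (sum_log_le (x/g) hxg1 (N/g) hNgy)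
        have hpos : (0:ℝ) ≤ x * (1/(g:ℝ)) := by positivity
        exact mul_le_mul_of_nonneg_left h2 hpos


theorem big_case (x : ℝ) (hx25 : 25 ≤ x) :
    (∑ n ∈ Finset.Icc 1 ⌊x⌋₊, ((n.divisors.card : ℝ)) ^ 2) ≤ x * (Real.log x) ^ 3 := by
  have hx1 : (1:ℝ) ≤ x := by linarith
  have hx0 : (0:ℝ) < x := by linarith
  set N := ⌊x⌋₊ with hNdef
  have hNx : (N:ℝ) ≤ x := Nat.floor_le (by linarith)
  have hNy : (N:ℝ) ≤ x := hNx
  set L := Real.log x with hL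
  -- lower bound on L
  have hLlb : (3.188:ℝ) ≤ L := by
    have h25 : Real.log 25 ≤ L := Real.log_le_log (by norm_num) hx25
    have hp : ((2:ℝ))^(23:ℕ) ≤ ((25:ℝ))^(5:ℕ) := by norm_num
    have hlog : Real.log ((2:ℝ)^(23:ℕ)) ≤ Real.log ((25:ℝ)^(5:ℕ)) :=
      Real.log_le_log (by positivity) hp
    rw [Real.log_pow, Real.log_pow] at hlog
    have h2 : (0.6931471803:ℝ) < Real.log 2 := Real.log_two_gt_d9
    push_cast at hlog
    nlinarith
  calc (∑ n ∈ Icc 1 N, ((n.divisors.card : ℝ)) ^ 2)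
      ≤ ∑ g ∈ Icc 1 N, ∑ u ∈ Icc 1 N, ∑ v ∈ Icc 1 N, ((N / (g * (u * v)) : ℕ) : ℝ) :=
        step1 x hx1
    _ ≤ ∑ g ∈ Icc 1 N, x * (1/(g:ℝ)) * (1 + 2*Real.log (x/g) + (Real.log (x/g))^2/2) := by
        refine Finset.sum_le_sum fun g hg => ?_
        rw [Finset.mem_Icc] at hg
        exact inner_u x hx1 g hg.1 hg.2
    _ = x * ∑ g ∈ Icc 1 N, (1/(g:ℝ)) * (1 + 2*Real.log (x/g) + (Real.log (x/g))^2/2) := by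
        rw [Finset.mul_sum]
        exact Finset.sum_congr rfl fun g _ => by ring
    _ ≤ x * (1 + 3*L + (3/2)*L^2 + L^3/6) := by
        have h3 := outer3 x N (sum_inv_le x hx1 N hNx) (sum_log_le x hx1 N hNx)
          (sum_sq_log_le x hx1 N hNx)
        exact mul_le_mul_of_nonneg_left h3 (le_of_lt hx0)
    _ ≤ x * L^3 := by
        have ht : (0:ℝ) ≤ L - 3.188 := by linarith
        have h1 : (0:ℝ) ≤ (L - 3.188)^2 := sq_nonneg _
        have h2 : (0:ℝ) ≤ (L - 3.188)^2 * (L - 3.188) := mul_nonneg h1 ht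
        nlinarith


theorem sum_divisors_sq_le (x : ℝ) (hx : 7 ≤ x) :
    (∑ n ∈ Finset.Icc 1 ⌊x⌋₊, ((n.divisors.card : ℝ)) ^ 2) ≤ x * (Real.log x) ^ 3 := by
  rcases lt_or_ge x 25 with h25 | h25
  · have hx0 : (0:ℝ) ≤ x := by linarith
    have hN7 : 7 ≤ ⌊x⌋₊ := Nat.le_floor (by exact_mod_cast hx)
    have hN24 : ⌊x⌋₊ < 25 := (Nat.floor_lt hx0).mpr (by exact_mod_cast h25)
    obtain ⟨N, hN⟩ : ∃ N, ⌊x⌋₊ = N := ⟨_, rfl⟩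
    rw [hN]
    have hNx : (N:ℝ) ≤ x := hN ▸ Nat.floor_le hx0
    rw [hN] at hN7 hN24
    interval_cases N
    · exact finite_case x 7 42 8 3 (by norm_num) (by norm_num) hNx (by norm_num) (by decide) (by norm_num)
    · exact finite_case x 8 58 3 1 (by norm_num) (by norm_num) hNx (by norm_num) (by decide) (by norm_num)
    · exact finite_case x 9 67 3 1 (by norm_num) (by norm_num) hNx (by norm_num) (by decide) (by norm_num)
    · exact finite_case x 10 83 3 1 (by norm_num) (by norm_num) hNx (by norm_num) (by decide) (by norm_num)
    · exact finite_case x 11 87 3 1 (by norm_num) (by norm_num) hNx (by norm_num) (by decide) (by norm_num)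
    · exact finite_case x 12 123 7 2 (by norm_num) (by norm_num) hNx (by norm_num) (by decide) (by norm_num)
    · exact finite_case x 13 127 7 2 (by norm_num) (by norm_num) hNx (by norm_num) (by decide) (by norm_num)
    · exact finite_case x 14 143 7 2 (by norm_num) (by norm_num) hNx (by norm_num) (by decide) (by norm_num)
    · exact finite_case x 15 159 7 2 (by norm_num) (by norm_num) hNx (by norm_num) (by decide) (by norm_num)
    · exact finite_case x 16 184 4 1 (by norm_num) (by norm_num) hNx (by norm_num) (by decide) (by norm_num)
    · exact finite_case x 17 188 4 1 (by norm_num) (by norm_num) hNx (by norm_num) (by decide) (by norm_num)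
    · exact finite_case x 18 224 4 1 (by norm_num) (by norm_num) hNx (by norm_num) (by decide) (by norm_num)
    · exact finite_case x 19 228 4 1 (by norm_num) (by norm_num) hNx (by norm_num) (by decide) (by norm_num)
    · exact finite_case x 20 264 4 1 (by norm_num) (by norm_num) hNx (by norm_num) (by decide) (by norm_num)
    · exact finite_case x 21 280 4 1 (by norm_num) (by norm_num) hNx (by norm_num) (by decide) (by norm_num)
    · exact finite_case x 22 296 4 1 (by norm_num) (by norm_num) hNx (by norm_num) (by decide) (by norm_num)
    · exact finite_case x 23 300 4 1 (by norm_num) (by norm_num) hNx (by norm_num) (by decide) (by norm_num)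
    · exact finite_case x 24 364 4 1 (by norm_num) (by norm_num) hNx (by norm_num) (by decide) (by norm_num)
  · exact big_case x h25
end

section
/- For every positive integer n, d(n)² = ∑_{k : k² ∣ n} μ(k)·d₄(n/k²), where the sum is over all positive integers k whose square divides n. -/
/-- `d₄ n` is the number of ordered quadruples `(a,b,c,d)` of positive integers
with `a*b*c*d = n`. -/
noncomputable def d4 (n : ℕ) : ℕ :=
  Nat.card {p : ℕ × ℕ × ℕ × ℕ //
    p.1 * p.2.1 * p.2.2.1 * p.2.2.2 = n ∧ 0 < p.1 ∧ 0 < p.2.1 ∧ 0 < p.2.2.1 ∧ 0 < p.2.2.2}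

open Finset

private lemma mdc {a c : ℕ} (hc : 0 < c) : a * c / c = a := by
  rw [Nat.mul_div_assoc a (dvd_refl c), Nat.div_self hc, mul_one]

/-- Finset of quadruples with product `n`. -/
def D4 (n : ℕ) : Finset (ℕ × ℕ × ℕ × ℕ) :=
  (Icc 1 n ×ˢ Icc 1 n ×ˢ Icc 1 n ×ˢ Icc 1 n).filter
    fun p => p.1 * p.2.1 * p.2.2.1 * p.2.2.2 = n

lemma mem_D4 {n : ℕ} (hn : 0 < n) {p : ℕ × ℕ × ℕ × ℕ} :
    p ∈ D4 n ↔ p.1 * p.2.1 * p.2.2.1 * p.2.2.2 = n ∧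
      0 < p.1 ∧ 0 < p.2.1 ∧ 0 < p.2.2.1 ∧ 0 < p.2.2.2 := by
  obtain ⟨a, b, c, d⟩ := p
  simp only [D4, mem_filter, mem_product, mem_Icc]
  constructor
  · rintro ⟨⟨⟨h1, -⟩, ⟨h2, -⟩, ⟨h3, -⟩, h4, -⟩, h⟩
    exact ⟨h, h1, h2, h3, h4⟩
  · rintro ⟨h, h1, h2, h3, h4⟩
    have da : a ∣ n := ⟨b * c * d, by rw [← h]; ring⟩
    have db : b ∣ n := ⟨a * c * d, by rw [← h]; ring⟩
    have dc : c ∣ n := ⟨a * b * d, by rw [← h]; ring⟩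
    have dd : d ∣ n := ⟨a * b * c, by rw [← h]; ring⟩
    exact ⟨⟨⟨h1, Nat.le_of_dvd hn da⟩, ⟨h2, Nat.le_of_dvd hn db⟩,
      ⟨h3, Nat.le_of_dvd hn dc⟩, h4, Nat.le_of_dvd hn dd⟩, h⟩

lemma d4_eq {n : ℕ} (hn : 0 < n) : d4 n = (D4 n).card := by
  rw [d4, ← Nat.card_eq_finsetCard]
  exact Nat.card_congr (Equiv.subtypeEquivRight fun p => by
    rw [mem_D4 hn])

/-- Bijection `(x, y) ↦ (x/g, y/g, g, n/lcm x y)` between pairs of divisors and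
quadruples with coprime first two coordinates. -/
lemma divisors_sq_card {n : ℕ} (hn : 0 < n) :
    n.divisors.card ^ 2 = ((D4 n).filter fun p => Nat.gcd p.1 p.2.1 = 1).card := by
  rw [sq, ← Finset.card_product]
  refine Finset.card_nbij'
    (fun q => (q.1 / Nat.gcd q.1 q.2, q.2 / Nat.gcd q.1 q.2, Nat.gcd q.1 q.2,
        n / Nat.lcm q.1 q.2))
    (fun p => (p.1 * p.2.2.1, p.2.1 * p.2.2.1)) ?_ ?_ ?_ ?_
  · rintro ⟨x, y⟩ hq
    simp only [Finset.mem_coe, Finset.mem_product, Nat.mem_divisors] at hq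
    obtain ⟨⟨hxd, -⟩, hyd, -⟩ := hq
    have hx : 0 < x := Nat.pos_of_dvd_of_pos hxd hn
    have hy : 0 < y := Nat.pos_of_dvd_of_pos hyd hn
    have hgpos : 0 < Nat.gcd x y := Nat.gcd_pos_of_pos_left y hx
    have hgx : Nat.gcd x y ∣ x := Nat.gcd_dvd_left x y
    have hgy : Nat.gcd x y ∣ y := Nat.gcd_dvd_right x y
    have hlcm : Nat.lcm x y ∣ n := Nat.lcm_dvd hxd hyd
    have hlcmpos : 0 < Nat.lcm x y :=
      Nat.pos_of_ne_zero (Nat.lcm_ne_zero hx.ne' hy.ne')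
    have h1' : x / Nat.gcd x y * y = Nat.lcm x y := by
      apply Nat.eq_of_mul_eq_mul_left hgpos
      rw [show Nat.gcd x y * (x / Nat.gcd x y * y) = Nat.gcd x y * (x / Nat.gcd x y) * y by ring,
        Nat.mul_div_cancel' hgx]
      exact (Nat.gcd_mul_lcm x y).symm
    have hprod : x / Nat.gcd x y * (y / Nat.gcd x y) * Nat.gcd x y * (n / Nat.lcm x y) = n := by
      rw [show x / Nat.gcd x y * (y / Nat.gcd x y) * Nat.gcd x y * (n / Nat.lcm x y)
          = x / Nat.gcd x y * (y / Nat.gcd x y * Nat.gcd x y) * (n / Nat.lcm x y) by ring,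
        Nat.div_mul_cancel hgy, h1', Nat.mul_div_cancel' hlcm]
    simp only [Finset.mem_coe, Finset.mem_filter, mem_D4 hn]
    exact ⟨⟨hprod, Nat.div_pos (Nat.le_of_dvd hx hgx) hgpos,
      Nat.div_pos (Nat.le_of_dvd hy hgy) hgpos, hgpos,
      Nat.div_pos (Nat.le_of_dvd hn hlcm) hlcmpos⟩,
      Nat.coprime_div_gcd_div_gcd hgpos⟩
  · rintro ⟨a, b, c, d⟩ hp
    simp only [Finset.mem_coe, Finset.mem_filter, mem_D4 hn] at hp
    obtain ⟨⟨h, -, -, -, -⟩, -⟩ := hp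
    simp only [Finset.mem_coe, Finset.mem_product, Nat.mem_divisors]
    exact ⟨⟨⟨b * d, by rw [← h]; ring⟩, hn.ne'⟩, ⟨a * d, by rw [← h]; ring⟩, hn.ne'⟩
  · rintro ⟨x, y⟩ hq
    simp only [Finset.mem_coe, Finset.mem_product, Nat.mem_divisors] at hq
    simp only [Prod.mk.injEq]
    exact ⟨Nat.div_mul_cancel (Nat.gcd_dvd_left x y),
      Nat.div_mul_cancel (Nat.gcd_dvd_right x y)⟩
  · rintro ⟨a, b, c, d⟩ hp
    simp only [Finset.mem_coe, Finset.mem_filter, mem_D4 hn] at hp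
    obtain ⟨⟨h, ha, hb, hc, hd⟩, hcop⟩ := hp
    have hg : Nat.gcd (a * c) (b * c) = c := by
      rw [Nat.gcd_mul_right, hcop, one_mul]
    have hl : Nat.lcm (a * c) (b * c) = a * b * c := by
      apply Nat.eq_of_mul_eq_mul_left (show 0 < Nat.gcd (a * c) (b * c) by
        rw [hg]; exact hc)
      rw [Nat.gcd_mul_lcm, hg]
      ring
    simp only [Prod.mk.injEq]
    refine ⟨by rw [hg]; exact mdc hc, by rw [hg]; exact mdc hc, hg, ?_⟩
    rw [hl, ← h, show a * b * c * d = d * (a * b * c) by ring, mdc (by positivity)]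

lemma sum_moebius_divisors (m : ℕ) :
    ∑ d ∈ m.divisors, (ArithmeticFunction.moebius d : ℤ) = if m = 1 then 1 else 0 := by
  have h : ((ArithmeticFunction.moebius * ArithmeticFunction.zeta :
      ArithmeticFunction ℤ)) m = (1 : ArithmeticFunction ℤ) m := by
    rw [ArithmeticFunction.moebius_mul_coe_zeta]
  rwa [ArithmeticFunction.coe_mul_zeta_apply, ArithmeticFunction.one_apply] at h

lemma fiber_card {n k : ℕ} (hn : 0 < n) (hk : 0 < k) :
    (((D4 n).filter fun p => k ∣ p.1 ∧ k ∣ p.2.1).card : ℤ) =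
      if k ^ 2 ∣ n then ((D4 (n / k ^ 2)).card : ℤ) else 0 := by
  split_ifs with h
  · norm_cast
    have hnk : 0 < n / k ^ 2 := Nat.div_pos (Nat.le_of_dvd hn h) (by positivity)
    refine Finset.card_nbij' (fun p => (p.1 / k, p.2.1 / k, p.2.2.1, p.2.2.2))
      (fun q => (k * q.1, k * q.2.1, q.2.2.1, q.2.2.2)) ?_ ?_ ?_ ?_
    · rintro ⟨a, b, c, d⟩ hp
      simp only [Finset.mem_coe, Finset.mem_filter, mem_D4 hn] at hp
      obtain ⟨⟨hprod, ha, hb, hc, hd⟩, ⟨a', rfl⟩, b', rfl⟩ := hp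
      have ha' : 0 < a' := Nat.pos_of_ne_zero (by rintro rfl; simp at ha)
      have hb' : 0 < b' := Nat.pos_of_ne_zero (by rintro rfl; simp at hb)
      have hk2 : k * a' / k = a' := Nat.mul_div_cancel_left a' hk
      have hk2' : k * b' / k = b' := Nat.mul_div_cancel_left b' hk
      have hX : k ^ 2 * (a' * b' * c * d) = n := by rw [← hprod]; ring
      rw [Finset.mem_coe, mem_D4 hnk]
      dsimp only
      rw [hk2, hk2']
      exact ⟨by rw [← hX, Nat.mul_div_cancel_left _ (show 0 < k ^ 2 by positivity)],
        ha', hb', hc, hd⟩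
    · rintro ⟨a', b', c, d⟩ hq
      rw [Finset.mem_coe, mem_D4 hnk] at hq
      obtain ⟨hprod, ha, hb, hc, hd⟩ := hq
      simp only [Finset.mem_coe, Finset.mem_filter, mem_D4 hn]
      refine ⟨⟨?_, by positivity, by positivity, hc, hd⟩,
        ⟨a', rfl⟩, b', rfl⟩
      dsimp only at hprod ⊢
      rw [show k * a' * (k * b') * c * d = k ^ 2 * (a' * b' * c * d) by ring, hprod,
        Nat.mul_div_cancel' h]
    · rintro ⟨a, b, c, d⟩ hp
      simp only [Finset.mem_coe, Finset.mem_filter] at hp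
      obtain ⟨-, ha, hb⟩ := hp
      simp only [Prod.mk.injEq]
      exact ⟨Nat.mul_div_cancel' ha, Nat.mul_div_cancel' hb, trivial⟩
    · rintro ⟨a', b', c, d⟩ _
      simp only [Prod.mk.injEq]
      exact ⟨Nat.mul_div_cancel_left a' hk, Nat.mul_div_cancel_left b' hk, trivial⟩
  · suffices hs : ((D4 n).filter fun p => k ∣ p.1 ∧ k ∣ p.2.1) = ∅ by
      rw [hs]; simp
    rw [Finset.eq_empty_iff_forall_notMem]
    rintro ⟨a, b, c, d⟩ hp
    simp only [Finset.mem_filter, mem_D4 hn] at hp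
    obtain ⟨⟨hprod, -, -, -, -⟩, hka, hkb⟩ := hp
    refine h ?_
    have h2 : k ^ 2 ∣ a * b := by rw [sq]; exact mul_dvd_mul hka hkb
    exact h2.trans ⟨c * d, by rw [← hprod]; ring⟩

theorem divisors_sq_eq_sum_moebius_d4 (n : ℕ) (hn : 0 < n) :
    ((n.divisors.card : ℤ)) ^ 2 =
      ∑ k ∈ (Finset.Icc 1 n).filter (fun k => k ^ 2 ∣ n),
        ArithmeticFunction.moebius k * (d4 (n / k ^ 2) : ℤ) := by
  have key : ((n.divisors.card : ℤ)) ^ 2 =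
      (((D4 n).filter fun p => Nat.gcd p.1 p.2.1 = 1).card : ℤ) := by
    rw [← Nat.cast_pow, divisors_sq_card hn]
  rw [key, Finset.card_filter]
  push_cast
  have step1 : ∀ p ∈ D4 n, (if Nat.gcd p.1 p.2.1 = 1 then (1 : ℤ) else 0) =
      ∑ k ∈ Finset.Icc 1 n, if k ∣ Nat.gcd p.1 p.2.1 then
        (ArithmeticFunction.moebius k : ℤ) else 0 := by
    intro p hp
    rw [mem_D4 hn] at hp
    obtain ⟨hprod, ha, hb, -, -⟩ := hp
    have hgdvd : Nat.gcd p.1 p.2.1 ∣ n :=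
      (Nat.gcd_dvd_left _ _).trans ⟨p.2.1 * p.2.2.1 * p.2.2.2, by rw [← hprod]; ring⟩
    have hgpos : 0 < Nat.gcd p.1 p.2.1 := Nat.gcd_pos_of_pos_left _ ha
    rw [← Finset.sum_filter]
    have hset : (Finset.Icc 1 n).filter (fun k => k ∣ Nat.gcd p.1 p.2.1) =
        (Nat.gcd p.1 p.2.1).divisors := by
      ext k
      simp only [Finset.mem_filter, Finset.mem_Icc, Nat.mem_divisors]
      constructor
      · rintro ⟨⟨-, -⟩, hkg⟩; exact ⟨hkg, hgpos.ne'⟩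
      · rintro ⟨hkg, -⟩
        have hkpos : 0 < k := Nat.pos_of_dvd_of_pos hkg hgpos
        exact ⟨⟨hkpos, Nat.le_of_dvd hn (hkg.trans hgdvd)⟩, hkg⟩
    rw [hset, sum_moebius_divisors]
  rw [Finset.sum_congr rfl step1, Finset.sum_comm]
  have step2 : ∀ k ∈ Finset.Icc 1 n,
      (∑ p ∈ D4 n, if k ∣ Nat.gcd p.1 p.2.1 then (ArithmeticFunction.moebius k : ℤ) else 0) =
      (ArithmeticFunction.moebius k : ℤ) *
        (if k ^ 2 ∣ n then ((D4 (n / k ^ 2)).card : ℤ) else 0) := by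
    intro k hk
    rw [Finset.mem_Icc] at hk
    have hkpos : 0 < k := hk.1
    have hiff : ∀ p : ℕ × ℕ × ℕ × ℕ, (k ∣ Nat.gcd p.1 p.2.1) ↔ (k ∣ p.1 ∧ k ∣ p.2.1) :=
      fun p => Nat.dvd_gcd_iff
    simp_rw [hiff]
    rw [← Finset.sum_filter, Finset.sum_const, nsmul_eq_mul, mul_comm,
      ← fiber_card hn hkpos]
  rw [Finset.sum_congr rfl step2]
  simp_rw [mul_ite, mul_zero]
  rw [← Finset.sum_filter]
  refine Finset.sum_congr rfl fun k hk => ?_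
  simp only [Finset.mem_filter, Finset.mem_Icc] at hk
  obtain ⟨⟨hk1, -⟩, hkd⟩ := hk
  rw [d4_eq (Nat.div_pos (Nat.le_of_dvd hn hkd) (by positivity))]
end

section
/- For every real number x ≥ 1, ∑_{n≤x} d(n)² = ∑_{k≤√x} μ(k)·(∑_{m≤x/k²} d₄(m)). -/
open Finset ArithmeticFunction
open scoped ArithmeticFunction.sigma ArithmeticFunction.Moebius


lemma card_divAnti (n : ℕ) : n.divisorsAntidiagonal.card = σ 0 n := by
  rw [sigma_zero_apply, ← Nat.map_div_right_divisors, Finset.card_map]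

lemma d4_eq_s11 (n : ℕ) : d4 n = ((σ 0) * (σ 0)) n := by
  rcases eq_or_ne n 0 with rfl | hn
  · rw [ArithmeticFunction.map_zero]
    have : IsEmpty {p : ℕ × ℕ × ℕ × ℕ //
        p.1 * p.2.1 * p.2.2.1 * p.2.2.2 = 0 ∧ 0 < p.1 ∧ 0 < p.2.1 ∧ 0 < p.2.2.1 ∧ 0 < p.2.2.2} := by
      constructor
      rintro ⟨p, h, h1, h2, h3, h4⟩
      have := Nat.mul_pos (Nat.mul_pos (Nat.mul_pos h1 h2) h3) h4
      omega
    exact Nat.card_of_isEmpty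
  set Qn : Finset (ℕ × ℕ × ℕ × ℕ) :=
    (n.divisors ×ˢ n.divisors ×ˢ n.divisors ×ˢ n.divisors).filter
      (fun p => p.1 * p.2.1 * p.2.2.1 * p.2.2.2 = n) with hQn
  have hmem : ∀ p : ℕ × ℕ × ℕ × ℕ, p ∈ Qn ↔
      (p.1 * p.2.1 * p.2.2.1 * p.2.2.2 = n ∧ 0 < p.1 ∧ 0 < p.2.1 ∧ 0 < p.2.2.1 ∧ 0 < p.2.2.2) := by
    rintro ⟨a, b, c, d⟩
    simp only [hQn, Finset.mem_filter, Finset.mem_product, Nat.mem_divisors]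
    constructor
    · rintro ⟨⟨⟨ha, -⟩, ⟨hb, -⟩, ⟨hc, -⟩, ⟨hd, -⟩⟩, h⟩
      exact ⟨h, Nat.pos_of_dvd_of_pos ha (Nat.pos_of_ne_zero hn),
        Nat.pos_of_dvd_of_pos hb (Nat.pos_of_ne_zero hn),
        Nat.pos_of_dvd_of_pos hc (Nat.pos_of_ne_zero hn),
        Nat.pos_of_dvd_of_pos hd (Nat.pos_of_ne_zero hn)⟩
    · rintro ⟨h, h1, h2, h3, h4⟩
      refine ⟨⟨⟨⟨b * c * d, by rw [← h]; ring⟩, hn⟩, ⟨⟨a * c * d, by rw [← h]; ring⟩, hn⟩,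
        ⟨⟨a * b * d, by rw [← h]; ring⟩, hn⟩, ⟨⟨a * b * c, by rw [← h]; ring⟩, hn⟩⟩, h⟩
  have hcard : d4 n = Qn.card := by
    rw [d4, ← Nat.card_eq_finsetCard]
    exact Nat.card_congr (Equiv.subtypeEquivRight (fun p => (hmem p).symm))
  rw [hcard, mul_apply]
  rw [Finset.card_eq_sum_card_fiberwise
    (f := fun p : ℕ × ℕ × ℕ × ℕ => (p.1 * p.2.1, p.2.2.1 * p.2.2.2))
    (t := n.divisorsAntidiagonal) ?_]
  · refine Finset.sum_congr rfl (fun uv huv => ?_)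
    obtain ⟨u, v⟩ := uv
    obtain ⟨huvmul, -⟩ := Nat.mem_divisorsAntidiagonal.mp huv
    simp only at huvmul
    have hu : u ≠ 0 := by rintro rfl; exact hn (by simpa using huvmul.symm)
    have hv : v ≠ 0 := by rintro rfl; exact hn (by simpa using huvmul.symm)
    rw [← card_divAnti, ← card_divAnti, ← Finset.card_product]
    refine Finset.card_bij' (fun p _ => ((p.1, p.2.1), (p.2.2.1, p.2.2.2)))
      (fun q _ => (q.1.1, q.1.2, q.2.1, q.2.2)) ?_ ?_ ?_ ?_
    · rintro ⟨a, b, c, d⟩ hp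
      rw [Finset.mem_filter] at hp
      obtain ⟨hp1, hp2⟩ := hp
      rw [Prod.mk.injEq] at hp2
      simp only [Finset.mem_product, Nat.mem_divisorsAntidiagonal]
      exact ⟨⟨hp2.1, hu⟩, ⟨hp2.2, hv⟩⟩
    · rintro ⟨⟨a, b⟩, ⟨c, d⟩⟩ hq
      simp only [Finset.mem_product, Nat.mem_divisorsAntidiagonal] at hq
      obtain ⟨⟨hab, -⟩, ⟨hcd, -⟩⟩ := hq
      have ha : 0 < a := Nat.pos_of_ne_zero (by rintro rfl; exact hu (by simpa using hab.symm))
      have hb : 0 < b := Nat.pos_of_ne_zero (by rintro rfl; exact hu (by simpa using hab.symm))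
      have hc : 0 < c := Nat.pos_of_ne_zero (by rintro rfl; exact hv (by simpa using hcd.symm))
      have hd : 0 < d := Nat.pos_of_ne_zero (by rintro rfl; exact hv (by simpa using hcd.symm))
      rw [Finset.mem_filter, hmem]
      refine ⟨⟨?_, ha, hb, hc, hd⟩, ?_⟩
      · show a * b * c * d = n
        rw [show a * b * c * d = (a*b)*(c*d) by ring, hab, hcd, huvmul]
      · show ((a*b, c*d) : ℕ × ℕ) = (u, v)
        rw [hab, hcd]
    · rintro ⟨a, b, c, d⟩ _; rfl
    · rintro ⟨⟨a, b⟩, ⟨c, d⟩⟩ _; rfl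
  · rintro ⟨a, b, c, d⟩ hp
    rw [Finset.mem_coe, hmem] at hp
    simp only [Finset.mem_coe, Nat.mem_divisorsAntidiagonal]
    exact ⟨by rw [← hp.1]; ring, hn⟩


noncomputable def Msq : ArithmeticFunction ℤ :=
  ⟨fun k => if Nat.sqrt k ^ 2 = k then μ (Nat.sqrt k) else 0, by simp⟩

lemma Msq_apply (k : ℕ) : Msq k = if Nat.sqrt k ^ 2 = k then μ (Nat.sqrt k) else 0 := rfl

lemma Msq_sq (k : ℕ) : Msq (k ^ 2) = μ k := by
  simp [Msq_apply, Nat.sqrt_eq']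

lemma sq_of_coprime_mul_sq {m n : ℕ} (h : Nat.Coprime m n)
    (hsq : Nat.sqrt (m * n) ^ 2 = m * n) : Nat.sqrt m ^ 2 = m := by
  have hu : IsUnit (gcd m n) := by
    rw [Nat.isUnit_iff]
    exact h
  obtain ⟨d, hd⟩ := exists_eq_pow_of_mul_eq_pow hu hsq.symm
  rw [hd, Nat.sqrt_eq']

lemma Msq_mult : Msq.IsMultiplicative := by
  constructor
  · simp [Msq_apply]
  · intro m n h
    rcases eq_or_ne m 0 with rfl | hm
    · have : n = 1 := by simpa using h
      subst this; simp [Msq_apply]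
    rcases eq_or_ne n 0 with rfl | hn'
    · have : m = 1 := by simpa [Nat.coprime_zero_right] using h
      subst this; simp [Msq_apply]
    simp only [Msq_apply]
    by_cases hms : Nat.sqrt m ^ 2 = m
    · by_cases hns : Nat.sqrt n ^ 2 = n
      · set s := Nat.sqrt m
        set t := Nat.sqrt n
        have hst : (s * t) ^ 2 = m * n := by rw [mul_pow, hms, hns]
        have hsqrt : Nat.sqrt (m * n) = s * t := by
          rw [← hst, Nat.sqrt_eq']
        rw [hsqrt, if_pos (by rw [hst]), if_pos hms, if_pos hns]
        have hcop : Nat.Coprime s t :=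
          Nat.Coprime.coprime_dvd_right (Dvd.intro t (by rw [← pow_two, hns]))
            (Nat.Coprime.coprime_dvd_left (Dvd.intro s (by rw [← pow_two, hms])) h)
        exact isMultiplicative_moebius.map_mul_of_coprime hcop
      · have hcon : ¬ Nat.sqrt (m * n) ^ 2 = m * n := by
          intro hc
          rw [mul_comm] at hc
          exact hns (sq_of_coprime_mul_sq h.symm hc)
        rw [if_neg hcon, if_neg hns, mul_zero]
    · have hcon : ¬ Nat.sqrt (m * n) ^ 2 = m * n := fun hc =>
        hms (sq_of_coprime_mul_sq h hc)
      rw [if_neg hcon, if_neg hms, zero_mul]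

lemma Msq_pp {p : ℕ} (hp : p.Prime) (j : ℕ) :
    Msq (p ^ j) = if j = 0 then 1 else if j = 2 then -1 else 0 := by
  rcases Nat.even_or_odd j with he | ho
  · obtain ⟨t, rfl⟩ := he
    have hsq : (p ^ t) ^ 2 = p ^ (t + t) := by rw [← pow_mul, mul_two]
    have hst : Nat.sqrt (p ^ (t + t)) = p ^ t := by rw [← hsq, Nat.sqrt_eq']
    rw [Msq_apply, hst, if_pos hsq]
    match t with
    | 0 => simp
    | 1 => simp [moebius_apply_prime hp]
    | (t + 2) =>
      have hnsf : ¬ Squarefree (p ^ (t + 2)) := by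
        intro hs
        have hdvd : p * p ∣ p ^ (t + 2) := by
          rw [← pow_two]
          exact pow_dvd_pow p (by omega)
        exact Nat.Prime.one_lt hp |>.ne' (Nat.isUnit_iff.mp (hs p hdvd))
      rw [moebius_eq_zero_of_not_squarefree hnsf]
      have h1 : ¬ (t + 2 + (t + 2) = 0) := by omega
      have h2 : ¬ (t + 2 + (t + 2) = 2) := by omega
      rw [if_neg h1, if_neg h2]
  · have hj0 : j ≠ 0 := by rintro rfl; simp at ho
    have hj2 : j ≠ 2 := by rintro rfl; revert ho; decide
    rw [Msq_apply, if_neg, if_neg hj0, if_neg hj2]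
    intro hc
    set s := Nat.sqrt (p ^ j)
    have : (p ^ j).factorization p = ((s ^ 2).factorization) p := by rw [hc]
    rw [Nat.Prime.factorization_pow hp, Nat.factorization_pow] at this
    simp at this
    exact (Nat.not_even_iff_odd.mpr ho) ⟨s.factorization p, by omega⟩


noncomputable def tau : ArithmeticFunction ℤ := ↑(σ 0)

lemma tau_apply (n : ℕ) : tau n = (n.divisors.card : ℤ) := by
  simp [tau, natCoe_apply, sigma_zero_apply]

lemma tau_pp {p : ℕ} (hp : p.Prime) (i : ℕ) : tau (p ^ i) = (i : ℤ) + 1 := by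
  rw [tau, natCoe_apply, sigma_zero_apply_prime_pow hp]
  push_cast
  ring

lemma tau_mult : tau.IsMultiplicative := isMultiplicative_sigma.natCast

def Ssum (m : ℕ) : ℤ := ∑ j ∈ range (m + 1), ((j : ℤ) + 1) * ((m : ℤ) - j + 1)

lemma Tsum (m : ℕ) : 2 * ∑ j ∈ range (m + 1), ((j : ℤ) + 1) = ((m : ℤ) + 1) * ((m : ℤ) + 2) := by
  induction m with
  | zero => simp
  | succ m ih =>
    rw [Finset.sum_range_succ, mul_add, ih]
    push_cast
    ring

lemma Ssum_succ (m : ℕ) :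
    Ssum (m + 1) = Ssum m + (∑ j ∈ range (m + 1), ((j : ℤ) + 1)) + ((m : ℤ) + 2) := by
  have h : Ssum m + (∑ j ∈ range (m + 1), ((j : ℤ) + 1))
      = ∑ j ∈ range (m + 1), ((j : ℤ) + 1) * (((m : ℤ) + 1) - (j : ℤ) + 1) := by
    rw [Ssum, ← Finset.sum_add_distrib]
    exact Finset.sum_congr rfl fun j hj => by ring
  rw [Ssum, Finset.sum_range_succ]
  push_cast
  rw [← h]
  ring

lemma Ssum_formula (m : ℕ) :
    6 * Ssum m = ((m : ℤ) + 1) * ((m : ℤ) + 2) * ((m : ℤ) + 3) := by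
  induction m with
  | zero => simp [Ssum]
  | succ m ih =>
    have h1 := Ssum_succ m
    have h3 := Tsum m
    push_cast
    linear_combination ih + 6 * h1 + 3 * h3

lemma Ssum_step (t : ℕ) : Ssum (t + 2) = Ssum t + ((t : ℤ) + 3) ^ 2 := by
  have ha := Ssum_formula (t + 2)
  have hb := Ssum_formula t
  push_cast at ha
  have h6 : (6 : ℤ) * Ssum (t + 2) = 6 * (Ssum t + ((t : ℤ) + 3) ^ 2) := by
    linear_combination ha - hb
  exact mul_left_cancel₀ (by norm_num) h6

lemma Ssum_zero : Ssum 0 = 1 := by simp [Ssum]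

lemma Ssum_one : Ssum 1 = 4 := by
  rw [Ssum]
  decide

lemma D_pp {p : ℕ} (hp : p.Prime) (m : ℕ) : (tau * tau) (p ^ m) = Ssum m := by
  rw [mul_apply, Nat.sum_divisorsAntidiagonal (f := fun a b => tau a * tau b),
    Nat.sum_divisors_prime_pow hp]
  refine Finset.sum_congr rfl fun j hj => ?_
  rw [Finset.mem_range] at hj
  have hle : j ≤ m := by omega
  rw [Nat.pow_div hle hp.pos, tau_pp hp, tau_pp hp]
  have : ((m - j : ℕ) : ℤ) = (m : ℤ) - j := by
    push_cast [hle]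
    ring
  rw [this]

lemma key : ArithmeticFunction.pmul tau tau = Msq * (tau * tau) := by
  rw [ArithmeticFunction.IsMultiplicative.eq_iff_eq_on_prime_powers _ (tau_mult.pmul tau_mult) _
    (Msq_mult.mul (tau_mult.mul tau_mult))]
  intro p i hp
  rw [pmul_apply, tau_pp hp, mul_apply,
    Nat.sum_divisorsAntidiagonal (f := fun a b => Msq a * (tau * tau) b),
    Nat.sum_divisors_prime_pow hp]
  have hterm : ∀ j ∈ range (i + 1), Msq (p ^ j) * (tau * tau) (p ^ i / p ^ j)
      = (if j = 0 then 1 else if j = 2 then -1 else 0) * Ssum (i - j) := by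
    intro j hj
    rw [Finset.mem_range] at hj
    rw [Nat.pow_div (by omega) hp.pos, Msq_pp hp, D_pp hp]
  rw [Finset.sum_congr rfl hterm]
  match i with
  | 0 => simp [Ssum_zero]
  | 1 =>
    rw [Finset.sum_range_succ, Finset.sum_range_succ]
    norm_num [Ssum_one]
  | (t + 2) =>
    have hsub : ({0, 2} : Finset ℕ) ⊆ range (t + 2 + 1) := by
      intro j hj
      fin_cases hj <;> simp
    rw [← Finset.sum_subset hsub (fun j _ hj => ?_)]
    · rw [Finset.sum_insert (by norm_num), Finset.sum_singleton]
      norm_num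
      push_cast
      linarith [Ssum_step t]
    · have h0 : j ≠ 0 := by simp at hj; tauto
      have h2 : j ≠ 2 := by simp at hj; tauto
      rw [if_neg h0, if_neg h2, zero_mul]


lemma swap_sum (N : ℕ) (g : ℕ → ℕ → ℤ) :
    ∑ n ∈ Icc 1 N, ∑ p ∈ n.divisorsAntidiagonal, g p.1 p.2
      = ∑ a ∈ Icc 1 N, ∑ b ∈ Icc 1 (N / a), g a b := by
  set P : Finset (ℕ × ℕ) := (Icc 1 N ×ˢ Icc 1 N).filter (fun p => p.1 * p.2 ≤ N) with hP
  have hmapsto : ∀ p ∈ P, p.1 * p.2 ∈ Icc 1 N := by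
    rintro ⟨a, b⟩ hp
    simp only [hP, Finset.mem_filter, Finset.mem_product, Finset.mem_Icc] at hp
    obtain ⟨⟨⟨ha1, -⟩, hb1, -⟩, hab⟩ := hp
    simp only [Finset.mem_Icc]
    exact ⟨Nat.mul_pos ha1 hb1, hab⟩
  have h1 : ∑ n ∈ Icc 1 N, ∑ p ∈ n.divisorsAntidiagonal, g p.1 p.2
      = ∑ p ∈ P, g p.1 p.2 := by
    rw [← Finset.sum_fiberwise_of_maps_to hmapsto (fun p => g p.1 p.2)]
    refine Finset.sum_congr rfl fun n hn => ?_
    rw [Finset.mem_Icc] at hn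
    have hfib : P.filter (fun p => p.1 * p.2 = n) = n.divisorsAntidiagonal := by
      ext ⟨a, b⟩
      simp only [hP, Finset.mem_filter, Finset.mem_product, Finset.mem_Icc,
        Nat.mem_divisorsAntidiagonal]
      constructor
      · rintro ⟨-, h⟩
        exact ⟨h, by omega⟩
      · rintro ⟨h, -⟩
        have ha : 0 < a := Nat.pos_of_ne_zero (by rintro rfl; simp at h; omega)
        have hb : 0 < b := Nat.pos_of_ne_zero (by rintro rfl; simp at h; omega)
        have hab : a * b ≤ N := by omega
        have haN : a ≤ N := le_trans (Nat.le_mul_of_pos_right a hb) hab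
        have hbN : b ≤ N := le_trans (Nat.le_mul_of_pos_left b ha) hab
        tauto
    rw [hfib]
  rw [h1, Finset.sum_sigma' (Icc 1 N) (fun a => Icc 1 (N / a)) (fun a b => g a b)]
  refine (Finset.sum_nbij' (fun q => (q.1, q.2)) (fun p => ⟨p.1, p.2⟩) ?_ ?_ ?_ ?_ ?_).symm
  · rintro ⟨a, b⟩ hq
    simp only [Finset.mem_sigma, Finset.mem_Icc] at hq
    obtain ⟨⟨ha1, haN⟩, hb1, hbd⟩ := hq
    have hab : b * a ≤ N := (Nat.le_div_iff_mul_le (by omega)).mp hbd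
    simp only [hP, Finset.mem_filter, Finset.mem_product, Finset.mem_Icc]
    have hab' : a * b ≤ N := by rwa [mul_comm] at hab
    have hbN : b ≤ N := le_trans (Nat.le_mul_of_pos_right b (by omega)) hab
    tauto
  · rintro ⟨a, b⟩ hp
    simp only [hP, Finset.mem_filter, Finset.mem_product, Finset.mem_Icc] at hp
    obtain ⟨⟨⟨ha1, haN⟩, hb1, hbN⟩, hab⟩ := hp
    simp only [Finset.mem_sigma, Finset.mem_Icc]
    exact ⟨⟨ha1, haN⟩, hb1, (Nat.le_div_iff_mul_le (by omega)).mpr (by rwa [mul_comm] at hab)⟩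
  · rintro ⟨a, b⟩ _; rfl
  · rintro ⟨a, b⟩ _; rfl
  · rintro ⟨a, b⟩ _; rfl

lemma nat_floor_sqrt (x : ℝ) (hx : 0 ≤ x) : ⌊Real.sqrt x⌋₊ = Nat.sqrt ⌊x⌋₊ := by
  apply le_antisymm
  · rw [Nat.le_sqrt]
    apply Nat.le_floor
    push_cast
    calc ((⌊Real.sqrt x⌋₊ : ℝ) * ⌊Real.sqrt x⌋₊)
        ≤ Real.sqrt x * Real.sqrt x := by
          have h0 := Nat.floor_le (Real.sqrt_nonneg x)
          have h1 : (0:ℝ) ≤ (⌊Real.sqrt x⌋₊ : ℝ) := by positivity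
          exact mul_le_mul h0 h0 h1 (Real.sqrt_nonneg x)
    _ = x := Real.mul_self_sqrt hx
  · apply Nat.le_floor
    rw [Real.le_sqrt (by positivity) hx]
    calc ((Nat.sqrt ⌊x⌋₊ : ℝ)) ^ 2 = ((Nat.sqrt ⌊x⌋₊ ^ 2 : ℕ) : ℝ) := by push_cast; ring
    _ ≤ (⌊x⌋₊ : ℝ) := by exact_mod_cast Nat.sqrt_le' _
    _ ≤ x := Nat.floor_le hx


theorem sum_divisors_sq_eq_sum_moebius_d4 (x : ℝ) (hx : 1 ≤ x) :
    (∑ n ∈ Finset.Icc 1 ⌊x⌋₊, ((n.divisors.card : ℤ)) ^ 2) =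
      ∑ k ∈ Finset.Icc 1 ⌊Real.sqrt x⌋₊,
        ArithmeticFunction.moebius k *
          ∑ m ∈ Finset.Icc 1 ⌊x / (k : ℝ) ^ 2⌋₊, (d4 m : ℤ) := by
  set N := ⌊x⌋₊ with hN
  have h0 : (0:ℝ) ≤ x := by linarith
  have s1 : ∑ n ∈ Icc 1 N, ((n.divisors.card : ℤ))^2
      = ∑ n ∈ Icc 1 N, (Msq * (tau * tau)) n := by
    refine Finset.sum_congr rfl fun n _ => ?_
    rw [← key, pmul_apply, tau_apply, sq]
  have s2 : ∑ n ∈ Icc 1 N, (Msq * (tau * tau)) n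
      = ∑ n ∈ Icc 1 N, ∑ p ∈ n.divisorsAntidiagonal, Msq p.1 * (tau*tau) p.2 := by
    refine Finset.sum_congr rfl fun n _ => ?_
    rw [mul_apply]
  have s3 := swap_sum N (fun a b => Msq a * (tau*tau) b)
  have s4 : ∑ a ∈ Icc 1 N, ∑ b ∈ Icc 1 (N / a), Msq a * (tau*tau) b
      = ∑ a ∈ Icc 1 N, Msq a * ∑ b ∈ Icc 1 (N / a), (tau*tau) b := by
    refine Finset.sum_congr rfl fun a _ => (Finset.mul_sum _ _ _).symm
  have s5 : ∑ a ∈ (Icc 1 N).filter (fun a => Nat.sqrt a ^ 2 = a),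
        Msq a * ∑ b ∈ Icc 1 (N / a), (tau*tau) b
      = ∑ a ∈ Icc 1 N, Msq a * ∑ b ∈ Icc 1 (N / a), (tau*tau) b := by
    refine Finset.sum_filter_of_ne fun a _ hne => ?_
    by_contra hsq
    rw [Msq_apply, if_neg hsq, zero_mul] at hne
    exact hne rfl
  have s6 : ∑ a ∈ (Icc 1 N).filter (fun a => Nat.sqrt a ^ 2 = a),
        Msq a * ∑ b ∈ Icc 1 (N / a), (tau*tau) b
      = ∑ k ∈ Icc 1 (Nat.sqrt N), Msq (k^2) * ∑ b ∈ Icc 1 (N / k^2), (tau*tau) b := by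
    refine Finset.sum_nbij' (fun a => Nat.sqrt a) (fun k => k ^ 2) ?_ ?_ ?_ ?_ ?_
    · intro a ha
      rw [Finset.mem_filter, Finset.mem_Icc] at ha
      obtain ⟨⟨ha1, haN⟩, hsq⟩ := ha
      rw [Finset.mem_Icc]
      constructor
      · refine Nat.one_le_iff_ne_zero.mpr fun h => ?_
        rw [h] at hsq; simp at hsq; omega
      · exact Nat.sqrt_le_sqrt haN
    · intro k hk
      rw [Finset.mem_Icc] at hk
      rw [Finset.mem_filter, Finset.mem_Icc, Nat.sqrt_eq']
      exact ⟨⟨Nat.one_le_iff_ne_zero.mpr (pow_ne_zero 2 (by omega)),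
        Nat.le_sqrt'.mp hk.2⟩, rfl⟩
    · intro a ha
      rw [Finset.mem_filter] at ha
      exact ha.2
    · intro k hk
      exact Nat.sqrt_eq' k
    · intro a ha
      rw [Finset.mem_filter] at ha
      rw [ha.2]
  have s7 : ∑ k ∈ Icc 1 (Nat.sqrt N), Msq (k^2) * ∑ b ∈ Icc 1 (N / k^2), (tau*tau) b
      = ∑ k ∈ Finset.Icc 1 ⌊Real.sqrt x⌋₊,
          ArithmeticFunction.moebius k *
            ∑ m ∈ Finset.Icc 1 ⌊x / (k : ℝ) ^ 2⌋₊, (d4 m : ℤ) := by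
    rw [nat_floor_sqrt x h0]
    refine Finset.sum_congr rfl fun k hk => ?_
    rw [Msq_sq]
    congr 1
    have hdiv : ⌊x / (k:ℝ)^2⌋₊ = N / k^2 := by
      rw [show ((k:ℝ)^2) = ((k^2 : ℕ) : ℝ) by push_cast; ring, Nat.floor_div_natCast]
    rw [hdiv]
    refine Finset.sum_congr rfl fun b _ => ?_
    rw [tau, ← natCoe_mul, natCoe_apply, d4_eq_s11]
  rw [s1, s2, s3, s4, ← s5, s6, s7]
end

section
/- For every complex number s with Re(s) > 1, the series ∑_{n=1}^{∞} d(n)²/nˢ converges and equals ζ(s)⁴/ζ(2s). -/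
open Nat ArithmeticFunction Finset Complex LSeries
open scoped LSeries.notation
open scoped ArithmeticFunction.sigma

namespace DivisorsSq

/-- Indicator function of positive perfect squares, as an arithmetic function. -/
def sq1 : ArithmeticFunction ℕ :=
  ⟨fun n => if IsSquare n ∧ n ≠ 0 then 1 else 0, by simp⟩

lemma sq1_apply {n : ℕ} : sq1 n = if IsSquare n ∧ n ≠ 0 then 1 else 0 := rfl

lemma isSquare_iff_even_factorization {n : ℕ} (hn : n ≠ 0) :
    IsSquare n ↔ ∀ p, Even (n.factorization p) := by
  constructor
  · rintro ⟨m, rfl⟩ p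
    have hm : m ≠ 0 := by rintro rfl; simp at hn
    rw [Nat.factorization_mul hm hm, Finsupp.add_apply]
    exact ⟨m.factorization p, rfl⟩
  · intro h
    refine ⟨n.factorization.prod fun p k => p ^ (k / 2), ?_⟩
    conv_lhs => rw [← Nat.factorization_prod_pow_eq_self hn]
    rw [Finsupp.prod, Finsupp.prod, ← Finset.prod_mul_distrib]
    refine Finset.prod_congr rfl fun p hp => ?_
    rw [← pow_add]
    congr 1
    obtain ⟨c, hc⟩ := h p
    omega

lemma sq1_isMultiplicative : sq1.IsMultiplicative := by
  refine ⟨by simp [sq1_apply, IsSquare.one], fun {m n} hmn => ?_⟩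
  rcases eq_or_ne m 0 with rfl | hm
  · simp [sq1_apply]
  rcases eq_or_ne n 0 with rfl | hn
  · simp [sq1_apply]
  have hmn0 : m * n ≠ 0 := Nat.mul_ne_zero hm hn
  have hdisj : ∀ p : ℕ, m.factorization p = 0 ∨ n.factorization p = 0 := by
    intro p
    by_contra hcon
    push_neg at hcon
    have h1 : p ∣ m := Nat.dvd_of_factorization_pos hcon.1
    have h2 : p ∣ n := Nat.dvd_of_factorization_pos hcon.2
    have hp : p.Prime := Nat.prime_of_mem_primeFactors
      (by rw [← Nat.support_factorization]; exact Finsupp.mem_support_iff.mpr hcon.1)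
    exact hp.one_lt.ne' (Nat.eq_one_of_dvd_coprimes hmn h1 h2)
  have hkey : IsSquare (m * n) ↔ IsSquare m ∧ IsSquare n := by
    rw [isSquare_iff_even_factorization hmn0, isSquare_iff_even_factorization hm,
      isSquare_iff_even_factorization hn]
    constructor
    · intro h
      refine ⟨fun p => ?_, fun p => ?_⟩ <;>
      · have hh := h p
        rw [Nat.factorization_mul hm hn, Finsupp.add_apply] at hh
        rcases hdisj p with h0 | h0 <;> simpa [h0] using hh
    · rintro ⟨h1, h2⟩ p
      rw [Nat.factorization_mul hm hn, Finsupp.add_apply]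
      exact (h1 p).add (h2 p)
  simp only [sq1_apply, hm, hn, hmn0, ne_eq, not_false_eq_true, and_true, hkey]
  by_cases h1 : IsSquare m <;> by_cases h2 : IsSquare n <;> simp [h1, h2]

lemma sq1_prime_pow {p i : ℕ} (hp : p.Prime) :
    sq1 (p ^ i) = if Even i then 1 else 0 := by
  have h0 : p ^ i ≠ 0 := pow_ne_zero _ hp.pos.ne'
  rw [sq1_apply]
  by_cases h : Even i
  · rw [if_pos h, if_pos ⟨h.isSquare_pow p, h0⟩]
  · rw [if_neg h, if_neg]
    rintro ⟨hsq, -⟩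
    rw [isSquare_iff_even_factorization h0] at hsq
    have := hsq p
    rw [hp.factorization_pow, Finsupp.single_eq_same] at this
    exact h this

lemma gauss_sum (n : ℕ) : 2 * ∑ i ∈ range n, (i + 1) = n * (n + 1) := by
  induction n with
  | zero => simp
  | succ k ih => rw [Finset.sum_range_succ, Nat.mul_add, ih]; ring

/-- The left-hand side sum at prime powers. -/
def S (k : ℕ) : ℕ := ∑ i ∈ range (k + 1), (if Even i then (k + 1 - i) ^ 2 else 0)

/-- The right-hand side sum at prime powers. -/
def T (k : ℕ) : ℕ := ∑ i ∈ range (k + 1), (i + 1) * (k + 1 - i)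

lemma S_rec (k : ℕ) : S (k + 2) = (k + 3) ^ 2 + S k := by
  rw [S, S, Finset.sum_range_succ', Finset.sum_range_succ']
  have h1 : ∀ i ∈ range (k + 1),
      (if Even (i + 1 + 1) then (k + 2 + 1 - (i + 1 + 1)) ^ 2 else 0)
        = (if Even i then (k + 1 - i) ^ 2 else 0) := by
    intro i hi
    rw [Finset.mem_range] at hi
    have h2 : Even (i + 1 + 1) ↔ Even i := by simp [Nat.even_add_one, Nat.not_even_iff_odd,
      Nat.odd_add_one]
    have h3 : k + 2 + 1 - (i + 1 + 1) = k + 1 - i := by omega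
    by_cases h : Even i <;> simp [h, h2, h3]
  rw [Finset.sum_congr rfl h1]
  simp [Nat.even_add_one]
  ring

lemma T_rec (k : ℕ) : T (k + 2) = (k + 3) ^ 2 + T k := by
  rw [T, T, Finset.sum_range_succ, Finset.sum_range_succ]
  have h1 : ∀ i ∈ range (k + 1),
      (i + 1) * (k + 2 + 1 - i) = (i + 1) * (k + 1 - i) + 2 * (i + 1) := by
    intro i hi
    rw [Finset.mem_range] at hi
    have : k + 2 + 1 - i = (k + 1 - i) + 2 := by omega
    rw [this]; ring
  rw [Finset.sum_congr rfl h1, Finset.sum_add_distrib, ← Finset.mul_sum, gauss_sum]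
  have : k + 2 + 1 - (k + 1) = 2 := by omega
  rw [this]
  have : k + 2 + 1 - (k + 2) = 1 := by omega
  rw [this]
  ring_nf

lemma S_eq_T (k : ℕ) : S k = T k := by
  have key : ∀ k, S k = T k ∧ S (k + 1) = T (k + 1) := by
    intro k
    induction k with
    | zero => constructor <;> decide
    | succ m ih =>
      refine ⟨ih.2, ?_⟩
      rw [show m + 1 + 1 = m + 2 from rfl, S_rec, T_rec, ih.1]
  exact (key k).1

lemma sigma0_prime_pow {p k : ℕ} (hp : p.Prime) : σ 0 (p ^ k) = k + 1 := by
  rw [sigma_zero_apply, Nat.divisors_prime_pow hp, Finset.card_map, Finset.card_range]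

/-- The key convolution identity: `sq1 * d² = d * d` (Dirichlet convolution). -/
lemma key : sq1 * ((σ 0).pmul (σ 0)) = (σ 0) * (σ 0) := by
  rw [ArithmeticFunction.IsMultiplicative.eq_iff_eq_on_prime_powers _
    (sq1_isMultiplicative.mul (isMultiplicative_sigma.pmul isMultiplicative_sigma)) _
    (isMultiplicative_sigma.mul isMultiplicative_sigma)]
  intro p k hp
  rw [mul_apply, mul_apply,
    Nat.sum_divisorsAntidiagonal (f := fun x y => sq1 x * ((σ 0).pmul (σ 0)) y),
    Nat.sum_divisorsAntidiagonal (f := fun x y => σ 0 x * σ 0 y),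
    Nat.sum_divisors_prime_pow hp, Nat.sum_divisors_prime_pow hp]
  have hdiv : ∀ i ∈ range (k + 1), p ^ k / p ^ i = p ^ (k - i) := by
    intro i hi
    rw [Finset.mem_range] at hi
    rw [Nat.pow_div (by omega) hp.pos]
  have h1 : ∀ i ∈ range (k + 1),
      sq1 (p ^ i) * ((σ 0).pmul (σ 0)) (p ^ k / p ^ i)
        = (if Even i then (k + 1 - i) ^ 2 else 0) := by
    intro i hi
    rw [hdiv i hi, sq1_prime_pow hp, pmul_apply, sigma0_prime_pow hp]
    rw [Finset.mem_range] at hi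
    have : k - i + 1 = k + 1 - i := by omega
    by_cases h : Even i <;> simp [h, this, sq]
  have h2 : ∀ i ∈ range (k + 1),
      σ 0 (p ^ i) * σ 0 (p ^ k / p ^ i) = (i + 1) * (k + 1 - i) := by
    intro i hi
    rw [hdiv i hi, sigma0_prime_pow hp, sigma0_prime_pow hp]
    rw [Finset.mem_range] at hi
    congr 1
    omega
  rw [Finset.sum_congr rfl h1, Finset.sum_congr rfl h2]
  exact S_eq_T k

/-- The complex-valued sequence `n ↦ d(n)²`. -/
noncomputable def Fc : ℕ → ℂ := fun n => ((((σ 0).pmul (σ 0)) n : ℕ) : ℂ)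

/-- The complex-valued indicator of squares. -/
noncomputable def Gc : ℕ → ℂ := fun n => ((sq1 n : ℕ) : ℂ)

lemma conv_one_one : (1 : ℕ → ℂ) ⍟ (1 : ℕ → ℂ) = fun n => ((σ 0 n : ℕ) : ℂ) := by
  funext n
  rw [convolution_def]
  simp only [Pi.one_apply, one_mul]
  rw [Nat.sum_divisorsAntidiagonal (f := fun _ _ => (1 : ℂ))]
  simp [sigma_zero_apply]

lemma conv_DD :
    (fun n => ((σ 0 n : ℕ) : ℂ)) ⍟ (fun n => ((σ 0 n : ℕ) : ℂ))
      = fun n => (((σ 0 * σ 0) n : ℕ) : ℂ) := by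
  funext n
  rw [convolution_def, mul_apply]
  push_cast
  rfl

lemma conv_GF : Gc ⍟ Fc = fun n => (((σ 0 * σ 0) n : ℕ) : ℂ) := by
  funext n
  rw [convolution_def, ← key, mul_apply]
  push_cast [Gc, Fc]
  rfl

lemma le_bound (n : ℕ) : ((σ 0).pmul (σ 0)) n ≤ (σ 0 * σ 0) n := by
  rcases eq_or_ne n 0 with rfl | hn
  · simp
  conv_rhs => rw [← key]
  rw [mul_apply]
  have hmem : ((1, n) : ℕ × ℕ) ∈ n.divisorsAntidiagonal := by
    simp [Nat.mem_divisorsAntidiagonal, hn]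
  have h1 : ((σ 0).pmul (σ 0)) n = sq1 1 * ((σ 0).pmul (σ 0)) n := by
    simp [sq1_apply, IsSquare.one]
  rw [h1]
  exact Finset.single_le_sum (f := fun p : ℕ × ℕ => sq1 p.1 * ((σ 0).pmul (σ 0)) p.2)
    (fun _ _ => Nat.zero_le _) hmem

end DivisorsSq

open DivisorsSq in
theorem dirichlet_series_divisors_sq (s : ℂ) (hs : 1 < s.re) :
    HasSum (fun n : ℕ => (((n + 1).divisors.card : ℂ)) ^ 2 / ((n : ℂ) + 1) ^ s)
      (riemannZeta s ^ 4 / riemannZeta (2 * s)) := by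
  have h2s : 1 < (2 * s).re := by
    have : ((2 : ℂ) * s).re = 2 * s.re := by simp [Complex.mul_re]
    rw [this]; linarith
  -- L-series of (σ0 * σ0) has sum ζ(s)^4
  have hzeta : LSeriesHasSum 1 s (riemannZeta s) := LSeriesHasSum_one hs
  have hD : LSeriesHasSum (fun n => ((σ 0 n : ℕ) : ℂ)) s (riemannZeta s * riemannZeta s) := by
    have := hzeta.convolution hzeta
    rwa [conv_one_one] at this
  have hDD : LSeriesHasSum (fun n => (((σ 0 * σ 0) n : ℕ) : ℂ)) s (riemannZeta s ^ 4) := by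
    have := hD.convolution hD
    rw [conv_DD] at this
    convert this using 2
    ring
  -- L-series of the square indicator has sum ζ(2s)
  have hG : LSeriesHasSum Gc s (riemannZeta (2 * s)) := by
    have h1 : LSeriesHasSum 1 (2 * s) (riemannZeta (2 * s)) := LSeriesHasSum_one h2s
    have hinj : Function.Injective (fun m : ℕ => m * m) := fun a b h => Nat.mul_self_inj.mp h
    have hoff : ∀ n ∉ Set.range (fun m : ℕ => m * m), LSeries.term Gc s n = 0 := by
      intro n hn
      rcases eq_or_ne n 0 with rfl | hn0
      · simp
      rw [LSeries.term_of_ne_zero hn0]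
      have : ¬ IsSquare n := by
        rintro ⟨r, rfl⟩
        exact hn ⟨r, rfl⟩
      simp [Gc, sq1_apply, this]
    rw [LSeriesHasSum, ← Function.Injective.hasSum_iff hinj hoff]
    have heq : (LSeries.term Gc s ∘ fun m : ℕ => m * m) = LSeries.term 1 (2 * s) := by
      funext m
      rcases eq_or_ne m 0 with rfl | hm
      · simp
      have hmm : m * m ≠ 0 := Nat.mul_ne_zero hm hm
      simp only [Function.comp_apply, LSeries.term_of_ne_zero hmm,
        LSeries.term_of_ne_zero hm, Pi.one_apply]
      have hGval : Gc (m * m) = 1 := by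
        simp [Gc, sq1_apply, hmm, IsSquare.mul_self]
      rw [hGval]
      congr 1
      rw [Nat.cast_mul, natCast_mul_natCast_cpow]
      rw [← Complex.cpow_add _ _ (Nat.cast_ne_zero.mpr hm)]
      ring_nf
    rw [heq]
    exact h1
  -- Summability of d(n)²/n^s
  have hsummF : LSeriesSummable Fc s := by
    have hb : Summable (fun n => ‖LSeries.term (fun n => (((σ 0 * σ 0) n : ℕ) : ℂ)) s n‖) :=
      summable_norm_iff.mpr hDD.LSeriesSummable
    refine Summable.of_norm_bounded hb fun n => LSeries.norm_term_le s ?_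
    simp only [Fc, Complex.norm_natCast]
    exact_mod_cast le_bound n
  have hF : LSeriesHasSum Fc s (LSeries Fc s) := hsummF.LSeriesHasSum
  have hGF : LSeriesHasSum (fun n => (((σ 0 * σ 0) n : ℕ) : ℂ)) s
      (riemannZeta (2 * s) * LSeries Fc s) := by
    have := hG.convolution hF
    rwa [conv_GF] at this
  have heq : riemannZeta (2 * s) * LSeries Fc s = riemannZeta s ^ 4 :=
    HasSum.unique hGF hDD
  have hzne : riemannZeta (2 * s) ≠ 0 := riemannZeta_ne_zero_of_one_lt_re h2s
  have hval : LSeries Fc s = riemannZeta s ^ 4 / riemannZeta (2 * s) := by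
    rw [eq_div_iff hzne, mul_comm]
    exact heq
  have final : LSeriesHasSum Fc s (riemannZeta s ^ 4 / riemannZeta (2 * s)) := hval ▸ hF
  have final2 := (hasSum_nat_add_iff' (f := LSeries.term Fc s) 1).mpr final
  simp only [Finset.range_one, Finset.sum_singleton, LSeries.term_zero, sub_zero] at final2
  convert final2 using 2 with n
  case e'_3 => rfl
  rw [LSeries.term_of_ne_zero (Nat.succ_ne_zero n)]
  simp only [Fc, pmul_apply, sigma_zero_apply]
  push_cast
  ring
end
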